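/- Let H be a bialgebra over a field k, and let ⇀, ↼ : H⊗H→H be a left and a right action of H on itself making H a left and right H-module coalgebra respectively. Define σ: H⊗H→H⊗H by σ(a⊗b) = (a₁⇀b₁)⊗(a₂↼b₂). Then σ satisfies the four compatibility conditions σ(Id⊗u)=u⊗Id, σ(u⊗Id)=Id⊗u, σ∘m_{23}=m_{12}σ_{23}σ_{12}, σ∘m_{12}=m_{23}σ_{12}σ_{23} if and only if (⇀,↼) satisfies: a⇀1=ε(a)1, 1↼a=ε(a)1, a⇀(bc)=(a₁⇀b₁)((a₂↼b₂)⇀c), and (ab)↼c=(a↼(b₁⇀c₁))(b₂↼c₂) for all a,b,c ∈ H. -/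

import Mathlib

open TensorProduct

noncomputable section

variable (k H : Type*) [Field k] [Ring H] [Bialgebra k H]

/-- Multiplication of `H` as a linear map. -/
def mu : H ⊗[k] H →ₗ[k] H := LinearMap.mul' k H
/-- Comultiplication. -/
def delta : H →ₗ[k] H ⊗[k] H := Coalgebra.comul
/-- Counit. -/
def eps : H →ₗ[k] k := Coalgebra.counit
/-- Flip `a⊗b ↦ b⊗a`. -/
def tau : H ⊗[k] H →ₗ[k] H ⊗[k] H := (TensorProduct.comm k H H).toLinearMap
/-- Associator. -/
def assocMap : (H ⊗[k] H) ⊗[k] H →ₗ[k] H ⊗[k] (H ⊗[k] H) :=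
  (TensorProduct.assoc k H H H).toLinearMap
/-- Inverse associator. -/
def assocInv : H ⊗[k] (H ⊗[k] H) →ₗ[k] (H ⊗[k] H) ⊗[k] H :=
  (TensorProduct.assoc k H H H).symm.toLinearMap
/-- The middle-four interchange `(a⊗b)⊗(c⊗d) ↦ (a⊗c)⊗(b⊗d)`. -/
def ttcMap : (H ⊗[k] H) ⊗[k] (H ⊗[k] H) →ₗ[k] (H ⊗[k] H) ⊗[k] (H ⊗[k] H) :=
  (TensorProduct.tensorTensorTensorComm k H H H H).toLinearMap
/-- `a⊗b ↦ (a₁⊗b₁)⊗(a₂⊗b₂)` (Sweedler notation). -/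
def dd : H ⊗[k] H →ₗ[k] (H ⊗[k] H) ⊗[k] (H ⊗[k] H) :=
  ttcMap k H ∘ₗ map (delta k H) (delta k H)
/-- `a⊗b ↦ ((a₁⊗b₁)⊗(a₂⊗b₂))⊗(a₃⊗b₃)`. -/
def ddd : H ⊗[k] H →ₗ[k] ((H ⊗[k] H) ⊗[k] (H ⊗[k] H)) ⊗[k] (H ⊗[k] H) :=
  map (dd k H) LinearMap.id ∘ₗ dd k H
/-- `a⊗b ↦ ε(a)ε(b)`. -/
def epseps : H ⊗[k] H →ₗ[k] k := LinearMap.mul' k k ∘ₗ map (eps k H) (eps k H)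
/-- `σ(a⊗b) = (a₁⇀b₁)⊗(a₂↼b₂)` attached to a pair of "actions". -/
def sig (l r : H ⊗[k] H →ₗ[k] H) : H ⊗[k] H →ₗ[k] H ⊗[k] H :=
  map l r ∘ₗ dd k H


namespace Tamb

variable {k H}

theorem repr_delta (a : H) (ra : Coalgebra.Repr k a (H × H)) :
    delta k H a = ∑ i ∈ ra.index, ra.left i ⊗ₜ[k] ra.right i := ra.eq.symm

theorem sum_eps_right (a : H) (ra : Coalgebra.Repr k a (H × H)) :
    ∑ i ∈ ra.index, eps k H (ra.right i) • ra.left i = a := by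
  have h2 := congrArg (TensorProduct.rid k H) (Coalgebra.sum_tmul_counit_eq (R := k) ra)
  simp only [map_sum, TensorProduct.rid_tmul, one_smul] at h2
  exact h2

theorem sum_eps_left (a : H) (ra : Coalgebra.Repr k a (H × H)) :
    ∑ i ∈ ra.index, eps k H (ra.left i) • ra.right i = a := by
  have h2 := congrArg (TensorProduct.lid k H) (Coalgebra.sum_counit_tmul_eq (R := k) ra)
  simp only [map_sum, TensorProduct.lid_tmul, one_smul] at h2
  exact h2

@[simp] theorem mu_tmul (x y : H) : mu k H (x ⊗ₜ[k] y) = x * y := rfl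

@[simp] theorem assocMap_tmul (x y z : H) :
    assocMap k H ((x ⊗ₜ[k] y) ⊗ₜ[k] z) = x ⊗ₜ[k] (y ⊗ₜ[k] z) := rfl

@[simp] theorem assocInv_tmul (x y z : H) :
    assocInv k H (x ⊗ₜ[k] (y ⊗ₜ[k] z)) = (x ⊗ₜ[k] y) ⊗ₜ[k] z := rfl

@[simp] theorem ttcMap_tmul (x y z w : H) :
    ttcMap k H ((x ⊗ₜ[k] y) ⊗ₜ[k] (z ⊗ₜ[k] w)) = (x ⊗ₜ[k] z) ⊗ₜ[k] (y ⊗ₜ[k] w) := rfl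

@[simp] theorem epseps_tmul (x y : H) :
    epseps k H (x ⊗ₜ[k] y) = eps k H x * eps k H y := rfl

theorem eps_hom (f : H ⊗[k] H →ₗ[k] H) (hf : eps k H ∘ₗ f = epseps k H) (x y : H) :
    eps k H (f (x ⊗ₜ[k] y)) = eps k H x * eps k H y := by
  have := LinearMap.congr_fun hf (x ⊗ₜ[k] y)
  simpa using this

theorem dd_tmul (a b : H) (ra : Coalgebra.Repr k a (H × H)) (rb : Coalgebra.Repr k b (H × H)) :
    dd k H (a ⊗ₜ[k] b) = ∑ i ∈ ra.index, ∑ j ∈ rb.index,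
      (ra.left i ⊗ₜ[k] rb.left j) ⊗ₜ[k] (ra.right i ⊗ₜ[k] rb.right j) := by
  simp only [dd, ttcMap, LinearMap.comp_apply, map_tmul, repr_delta a ra, repr_delta b rb]
  simp only [sum_tmul, tmul_sum, map_sum, LinearEquiv.coe_coe, tensorTensorTensorComm_tmul]
  rw [Finset.sum_comm]

theorem sig_tmul (l r : H ⊗[k] H →ₗ[k] H) (a b : H)
    (ra : Coalgebra.Repr k a (H × H)) (rb : Coalgebra.Repr k b (H × H)) :
    sig k H l r (a ⊗ₜ[k] b) = ∑ i ∈ ra.index, ∑ j ∈ rb.index,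
      l (ra.left i ⊗ₜ[k] rb.left j) ⊗ₜ[k] r (ra.right i ⊗ₜ[k] rb.right j) := by
  simp [sig, dd_tmul a b ra rb, map_sum]

theorem sig_expand (l r : H ⊗[k] H →ₗ[k] H) (z c : H) {i1 i2 : Type*}
    (s : Finset i1) (s' : Finset i2) (f g : i1 → H) (f' g' : i2 → H)
    (hz : delta k H z = ∑ u ∈ s, f u ⊗ₜ[k] g u)
    (hc : delta k H c = ∑ w ∈ s', f' w ⊗ₜ[k] g' w) :
    sig k H l r (z ⊗ₜ[k] c)
      = ∑ u ∈ s, ∑ w ∈ s', l (f u ⊗ₜ[k] f' w) ⊗ₜ[k] r (g u ⊗ₜ[k] g' w) := by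
  simp only [sig, dd, LinearMap.comp_apply, map_tmul]
  rw [hz, hc]
  simp only [sum_tmul, tmul_sum, map_sum, ttcMap_tmul, map_tmul]
  rw [Finset.sum_comm]

theorem delta_mul (b c : H) (rb : Coalgebra.Repr k b (H × H)) (rc : Coalgebra.Repr k c (H × H)) :
    delta k H (b * c) = ∑ p ∈ rb.index ×ˢ rc.index,
      (rb.left p.1 * rc.left p.2) ⊗ₜ[k] (rb.right p.1 * rc.right p.2) := by
  have h : delta k H (b * c) = delta k H b * delta k H c := Bialgebra.comul_mul b c
  rw [h, repr_delta b rb, repr_delta c rc, Finset.sum_mul_sum]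
  rw [← Finset.sum_product']
  exact Finset.sum_congr rfl fun p _ => (Algebra.TensorProduct.tmul_mul_tmul _ _ _ _)

theorem delta_hom (f : H ⊗[k] H →ₗ[k] H)
    (hf : delta k H ∘ₗ f = map f f ∘ₗ dd k H) (x y : H)
    (rx : Coalgebra.Repr k x (H × H)) (ry : Coalgebra.Repr k y (H × H)) :
    delta k H (f (x ⊗ₜ[k] y)) = ∑ p ∈ rx.index ×ˢ ry.index,
      f (rx.left p.1 ⊗ₜ[k] ry.left p.2) ⊗ₜ[k] f (rx.right p.1 ⊗ₜ[k] ry.right p.2) := by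
  have h := LinearMap.congr_fun hf (x ⊗ₜ[k] y)
  simp only [LinearMap.comp_apply] at h
  rw [h, dd_tmul x y rx ry]
  simp only [map_sum, map_tmul]
  rw [← Finset.sum_product']

/-- `x ⊗ y ↦ ε(y) • x`. -/
def lam : H ⊗[k] H →ₗ[k] H :=
  (TensorProduct.rid k H).toLinearMap ∘ₗ LinearMap.lTensor H (eps k H)

@[simp] theorem lam_tmul (x y : H) : lam (x ⊗ₜ[k] y) = eps k H y • x := rfl

/-- `x ⊗ y ↦ ε(x) • y`. -/
def lam' : H ⊗[k] H →ₗ[k] H :=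
  (TensorProduct.lid k H).toLinearMap ∘ₗ LinearMap.rTensor H (eps k H)

@[simp] theorem lam'_tmul (x y : H) : lam' (x ⊗ₜ[k] y) = eps k H x • y := rfl

theorem sum_smul_apply_right (l : H ⊗[k] H →ₗ[k] H) (b : H) (rb : Coalgebra.Repr k b (H × H))
    (s : k) (x : H) :
    ∑ j ∈ rb.index, (s * eps k H (rb.right j)) • l (x ⊗ₜ[k] rb.left j)
      = s • l (x ⊗ₜ[k] b) := by
  have : ∀ j, (s * eps k H (rb.right j)) • l (x ⊗ₜ[k] rb.left j)
      = s • l (x ⊗ₜ[k] (eps k H (rb.right j) • rb.left j)) := by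
    intro j; rw [tmul_smul, map_smul, smul_smul]
  rw [Finset.sum_congr rfl fun j _ => this j, ← Finset.smul_sum]
  congr 1
  rw [← map_sum, ← tmul_sum, sum_eps_right b rb]

theorem sum_smul_apply_left (l : H ⊗[k] H →ₗ[k] H) (b : H) (rb : Coalgebra.Repr k b (H × H))
    (s : k) (x : H) :
    ∑ j ∈ rb.index, (s * eps k H (rb.left j)) • l (x ⊗ₜ[k] rb.right j)
      = s • l (x ⊗ₜ[k] b) := by
  have : ∀ j, (s * eps k H (rb.left j)) • l (x ⊗ₜ[k] rb.right j)
      = s • l (x ⊗ₜ[k] (eps k H (rb.left j) • rb.right j)) := by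
    intro j; rw [tmul_smul, map_smul, smul_smul]
  rw [Finset.sum_congr rfl fun j _ => this j, ← Finset.smul_sum]
  congr 1
  rw [← map_sum, ← tmul_sum, sum_eps_left b rb]

theorem lam_comp_sig (l r : H ⊗[k] H →ₗ[k] H)
    (hr : eps k H ∘ₗ r = epseps k H) : lam ∘ₗ sig k H l r = l := by
  apply TensorProduct.ext'
  intro a b
  set ra := Coalgebra.Repr.arbitrary k a
  set rb := Coalgebra.Repr.arbitrary k b
  rw [LinearMap.comp_apply, sig_tmul l r a b ra rb]
  rw [map_sum]
  simp only [map_sum, lam_tmul, eps_hom r hr]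
  have inner : ∀ i, ∑ j ∈ rb.index,
      (eps k H (ra.right i) * eps k H (rb.right j)) • l (ra.left i ⊗ₜ[k] rb.left j)
      = eps k H (ra.right i) • l (ra.left i ⊗ₜ[k] b) := fun i =>
    sum_smul_apply_right l b rb _ _
  rw [Finset.sum_congr rfl fun i _ => inner i]
  have : ∀ i, eps k H (ra.right i) • l (ra.left i ⊗ₜ[k] b)
      = l ((eps k H (ra.right i) • ra.left i) ⊗ₜ[k] b) := by
    intro i; rw [← map_smul, smul_tmul']
  rw [Finset.sum_congr rfl fun i _ => this i, ← map_sum, ← sum_tmul, sum_eps_right a ra]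

theorem lam'_comp_sig (l r : H ⊗[k] H →ₗ[k] H)
    (hl : eps k H ∘ₗ l = epseps k H) : lam' ∘ₗ sig k H l r = r := by
  apply TensorProduct.ext'
  intro a b
  set ra := Coalgebra.Repr.arbitrary k a
  set rb := Coalgebra.Repr.arbitrary k b
  rw [LinearMap.comp_apply, sig_tmul l r a b ra rb]
  rw [map_sum]
  simp only [map_sum, lam'_tmul, eps_hom l hl]
  have inner : ∀ i, ∑ j ∈ rb.index,
      (eps k H (ra.left i) * eps k H (rb.left j)) • r (ra.right i ⊗ₜ[k] rb.right j)
      = eps k H (ra.left i) • r (ra.right i ⊗ₜ[k] b) := fun i =>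
    sum_smul_apply_left r b rb _ _
  rw [Finset.sum_congr rfl fun i _ => inner i]
  have : ∀ i, eps k H (ra.left i) • r (ra.right i ⊗ₜ[k] b)
      = r ((eps k H (ra.left i) • ra.right i) ⊗ₜ[k] b) := by
    intro i; rw [← map_smul, smul_tmul']
  rw [Finset.sum_congr rfl fun i _ => this i, ← map_sum, ← sum_tmul, sum_eps_left a ra]

/-- Repr of `1`. -/
def oneRepr : Coalgebra.Repr k (1 : H) (H × H) where
  index := ({((1 : H), (1 : H))} : Finset (H × H))
  left := fun _ => 1
  right := fun _ => 1
  eq := by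
    simp [Bialgebra.comul_one, Algebra.TensorProduct.one_def]

theorem sig_tmul_one (l r : H ⊗[k] H →ₗ[k] H) (hr1 : ∀ a : H, r (a ⊗ₜ[k] (1 : H)) = a)
    (a : H) (ra : Coalgebra.Repr k a (H × H)) :
    sig k H l r (a ⊗ₜ[k] (1 : H))
      = ∑ i ∈ ra.index, l (ra.left i ⊗ₜ[k] (1 : H)) ⊗ₜ[k] ra.right i := by
  rw [sig_tmul l r a 1 ra oneRepr]
  simp [oneRepr, hr1]

theorem sig_one_tmul (l r : H ⊗[k] H →ₗ[k] H) (hl1 : ∀ b : H, l ((1 : H) ⊗ₜ[k] b) = b)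
    (b : H) (rb : Coalgebra.Repr k b (H × H)) :
    sig k H l r ((1 : H) ⊗ₜ[k] b)
      = ∑ j ∈ rb.index, rb.left j ⊗ₜ[k] r ((1 : H) ⊗ₜ[k] rb.right j) := by
  rw [sig_tmul l r 1 b oneRepr rb]
  simp [oneRepr, hl1]

theorem part1 (l r : H ⊗[k] H →ₗ[k] H)
    (hr1 : ∀ a : H, r (a ⊗ₜ[k] (1 : H)) = a) :
    (∀ a : H, sig k H l r (a ⊗ₜ[k] (1 : H)) = (1 : H) ⊗ₜ[k] a)
      ↔ (∀ a : H, l (a ⊗ₜ[k] (1 : H)) = eps k H a • (1 : H)) := by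
  constructor
  · intro h a
    set ra := Coalgebra.Repr.arbitrary k a
    have h1 : ∑ i ∈ ra.index, l (ra.left i ⊗ₜ[k] (1 : H)) ⊗ₜ[k] ra.right i
        = (1 : H) ⊗ₜ[k] a := by rw [← sig_tmul_one l r hr1 a ra, h a]
    have h2 := congrArg (lam (k := k) (H := H)) h1
    simp only [map_sum, lam_tmul] at h2
    calc l (a ⊗ₜ[k] (1 : H))
        = l ((∑ i ∈ ra.index, eps k H (ra.right i) • ra.left i) ⊗ₜ[k] (1 : H)) := by
          rw [sum_eps_right a ra]
      _ = ∑ i ∈ ra.index, eps k H (ra.right i) • l (ra.left i ⊗ₜ[k] (1 : H)) := by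
          rw [sum_tmul, map_sum]
          exact Finset.sum_congr rfl fun i _ => by rw [← smul_tmul', map_smul]
      _ = eps k H a • (1 : H) := h2
  · intro h a
    set ra := Coalgebra.Repr.arbitrary k a
    rw [sig_tmul_one l r hr1 a ra]
    have : ∀ i, l (ra.left i ⊗ₜ[k] (1 : H)) ⊗ₜ[k] ra.right i
        = (1 : H) ⊗ₜ[k] (eps k H (ra.left i) • ra.right i) := by
      intro i; rw [h (ra.left i), smul_tmul]
    rw [Finset.sum_congr rfl fun i _ => this i, ← tmul_sum, sum_eps_left a ra]

theorem part2 (l r : H ⊗[k] H →ₗ[k] H)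
    (hl1 : ∀ b : H, l ((1 : H) ⊗ₜ[k] b) = b) :
    (∀ b : H, sig k H l r ((1 : H) ⊗ₜ[k] b) = b ⊗ₜ[k] (1 : H))
      ↔ (∀ b : H, r ((1 : H) ⊗ₜ[k] b) = eps k H b • (1 : H)) := by
  constructor
  · intro h b
    set rb := Coalgebra.Repr.arbitrary k b
    have h1 : ∑ j ∈ rb.index, rb.left j ⊗ₜ[k] r ((1 : H) ⊗ₜ[k] rb.right j)
        = b ⊗ₜ[k] (1 : H) := by rw [← sig_one_tmul l r hl1 b rb, h b]
    have h2 := congrArg (lam' (k := k) (H := H)) h1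
    simp only [map_sum, lam'_tmul] at h2
    calc r ((1 : H) ⊗ₜ[k] b)
        = r ((1 : H) ⊗ₜ[k] (∑ j ∈ rb.index, eps k H (rb.left j) • rb.right j)) := by
          rw [sum_eps_left b rb]
      _ = ∑ j ∈ rb.index, eps k H (rb.left j) • r ((1 : H) ⊗ₜ[k] rb.right j) := by
          rw [tmul_sum, map_sum]
          exact Finset.sum_congr rfl fun j _ => by rw [tmul_smul, map_smul]
      _ = eps k H b • (1 : H) := h2
  · intro h b
    set rb := Coalgebra.Repr.arbitrary k b
    rw [sig_one_tmul l r hl1 b rb]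
    have : ∀ j, rb.left j ⊗ₜ[k] r ((1 : H) ⊗ₜ[k] rb.right j)
        = (eps k H (rb.right j) • rb.left j) ⊗ₜ[k] (1 : H) := by
      intro j; rw [h (rb.right j), tmul_smul, smul_tmul']
    rw [Finset.sum_congr rfl fun j _ => this j, ← sum_tmul, sum_eps_right b rb]

variable (k H) in
/-- The auxiliary multilinear gadget for condition (br.3). -/
def theta (l r : H ⊗[k] H →ₗ[k] H) :
    (H ⊗[k] (H ⊗[k] H)) ⊗[k] ((H ⊗[k] (H ⊗[k] H)) ⊗[k] (H ⊗[k] H)) →ₗ[k] H ⊗[k] H :=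
  map (mu k H) LinearMap.id
  ∘ₗ (TensorProduct.assoc k H H H).symm.toLinearMap
  ∘ₗ LinearMap.lTensor H (map l r)
  ∘ₗ LinearMap.lTensor H (ttcMap k H)
  ∘ₗ (TensorProduct.assoc k H (H ⊗[k] H) (H ⊗[k] H)).toLinearMap
  ∘ₗ map (LinearMap.lTensor H (map r r)) LinearMap.id
  ∘ₗ map (map l (ttcMap k H)) LinearMap.id
  ∘ₗ map (TensorProduct.tensorTensorTensorComm k H (H ⊗[k] H) H (H ⊗[k] H)).toLinearMap
      LinearMap.id
  ∘ₗ (TensorProduct.assoc k (H ⊗[k] (H ⊗[k] H)) (H ⊗[k] (H ⊗[k] H)) (H ⊗[k] H)).symm.toLinearMap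

@[simp] theorem theta_tmul (l r : H ⊗[k] H →ₗ[k] H) (x y z x' y' z' w w' : H) :
    theta k H l r ((x ⊗ₜ[k] (y ⊗ₜ[k] z)) ⊗ₜ[k] ((x' ⊗ₜ[k] (y' ⊗ₜ[k] z')) ⊗ₜ[k] (w ⊗ₜ[k] w')))
      = (l (x ⊗ₜ[k] x') * l (r (y ⊗ₜ[k] y') ⊗ₜ[k] w)) ⊗ₜ[k] r (r (z ⊗ₜ[k] z') ⊗ₜ[k] w') := by
  simp [theta, ttcMap, mu]

variable (k H) in
/-- The auxiliary multilinear gadget for condition (br.4). -/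
def theta' (l r : H ⊗[k] H →ₗ[k] H) :
    (H ⊗[k] (H ⊗[k] H)) ⊗[k] ((H ⊗[k] (H ⊗[k] H)) ⊗[k] (H ⊗[k] H)) →ₗ[k] H ⊗[k] H :=
  map (l ∘ₗ (TensorProduct.comm k H H).toLinearMap)
      (mu k H ∘ₗ map r LinearMap.id ∘ₗ (TensorProduct.assoc k H H H).symm.toLinearMap
        ∘ₗ (TensorProduct.comm k (H ⊗[k] H) H).toLinearMap)
  ∘ₗ (TensorProduct.tensorTensorTensorComm k H (H ⊗[k] H) H H).toLinearMap
  ∘ₗ map (LinearMap.lTensor H (map l r)) LinearMap.id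
  ∘ₗ map (map l (ttcMap k H)) LinearMap.id
  ∘ₗ map (TensorProduct.tensorTensorTensorComm k H (H ⊗[k] H) H (H ⊗[k] H)).toLinearMap
      LinearMap.id
  ∘ₗ (TensorProduct.assoc k (H ⊗[k] (H ⊗[k] H)) (H ⊗[k] (H ⊗[k] H)) (H ⊗[k] H)).symm.toLinearMap

@[simp] theorem theta'_tmul (l r : H ⊗[k] H →ₗ[k] H) (x y z x' y' z' w w' : H) :
    theta' k H l r ((x ⊗ₜ[k] (y ⊗ₜ[k] z)) ⊗ₜ[k] ((x' ⊗ₜ[k] (y' ⊗ₜ[k] z')) ⊗ₜ[k] (w ⊗ₜ[k] w')))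
      = l (w ⊗ₜ[k] l (x ⊗ₜ[k] x')) ⊗ₜ[k] (r (w' ⊗ₜ[k] l (y ⊗ₜ[k] y')) * r (z ⊗ₜ[k] z')) := by
  simp [theta', ttcMap, mu]

theorem mp3_pointwise (l r : H ⊗[k] H →ₗ[k] H)
    (h3 : l ∘ₗ map LinearMap.id (mu k H) ∘ₗ assocMap k H
        = mu k H ∘ₗ map LinearMap.id l ∘ₗ assocMap k H ∘ₗ map (sig k H l r) LinearMap.id)
    (x y z : H) (rx : Coalgebra.Repr k x (H × H)) (ry : Coalgebra.Repr k y (H × H)) :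
    l (x ⊗ₜ[k] (y * z)) = ∑ p ∈ rx.index, ∑ q ∈ ry.index,
      l (rx.left p ⊗ₜ[k] ry.left q) * l (r (rx.right p ⊗ₜ[k] ry.right q) ⊗ₜ[k] z) := by
  have h := LinearMap.congr_fun h3 ((x ⊗ₜ[k] y) ⊗ₜ[k] z)
  simp only [LinearMap.comp_apply, assocMap_tmul, map_tmul,
    LinearMap.id_coe, id_eq, mu_tmul] at h
  rw [h, sig_tmul l r x y rx ry]
  simp only [sum_tmul, map_sum, assocMap_tmul, map_tmul, LinearMap.id_coe, id_eq, mu_tmul]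

theorem mp4_pointwise (l r : H ⊗[k] H →ₗ[k] H)
    (h4 : r ∘ₗ map (mu k H) LinearMap.id
        = mu k H ∘ₗ map r LinearMap.id ∘ₗ assocInv k H ∘ₗ map LinearMap.id (sig k H l r) ∘ₗ
            assocMap k H)
    (x y z : H) (ry : Coalgebra.Repr k y (H × H)) (rz : Coalgebra.Repr k z (H × H)) :
    r ((x * y) ⊗ₜ[k] z) = ∑ q ∈ ry.index, ∑ w ∈ rz.index,
      r (x ⊗ₜ[k] l (ry.left q ⊗ₜ[k] rz.left w)) * r (ry.right q ⊗ₜ[k] rz.right w) := by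
  have h := LinearMap.congr_fun h4 ((x ⊗ₜ[k] y) ⊗ₜ[k] z)
  simp only [LinearMap.comp_apply, map_tmul, LinearMap.id_coe, id_eq, mu_tmul,
    assocMap_tmul] at h
  rw [h, sig_tmul l r y z ry rz]
  simp only [tmul_sum, map_sum, assocInv_tmul, map_tmul, LinearMap.id_coe, id_eq, mu_tmul]

theorem lam_push (x : H) (T : H ⊗[k] H) :
    lam ((map (mu k H) LinearMap.id) (assocInv k H (x ⊗ₜ[k] T))) = x * lam T := by
  induction T using TensorProduct.induction_on with
  | zero => simp
  | tmul u v => simp [mul_smul_comm]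
  | add T₁ T₂ ih₁ ih₂ => simp only [tmul_add, map_add, mul_add, ih₁, ih₂]

theorem lam'_push (z : H) (T : H ⊗[k] H) :
    lam' ((map LinearMap.id (mu k H)) (assocMap k H (T ⊗ₜ[k] z))) = lam' T * z := by
  induction T using TensorProduct.induction_on with
  | zero => simp
  | tmul u v => simp [smul_mul_assoc]
  | add T₁ T₂ ih₁ ih₂ => simp only [add_tmul, map_add, add_mul, ih₁, ih₂]

theorem part3_forward (l r : H ⊗[k] H →ₗ[k] H)
    (hcounit_r : eps k H ∘ₗ r = epseps k H)
    (h : sig k H l r ∘ₗ map LinearMap.id (mu k H) ∘ₗ assocMap k H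
        = map (mu k H) LinearMap.id ∘ₗ assocInv k H ∘ₗ map LinearMap.id (sig k H l r) ∘ₗ
            assocMap k H ∘ₗ map (sig k H l r) LinearMap.id) :
    l ∘ₗ map LinearMap.id (mu k H) ∘ₗ assocMap k H
        = mu k H ∘ₗ map LinearMap.id l ∘ₗ assocMap k H ∘ₗ map (sig k H l r) LinearMap.id := by
  have hK : ∀ x : H ⊗[k] H, lam (sig k H l r x) = l x :=
    fun x => LinearMap.congr_fun (lam_comp_sig l r hcounit_r) x
  apply TensorProduct.ext_threefold
  intro a b c
  have main : ∀ S : H ⊗[k] H,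
      lam ((map (mu k H) LinearMap.id) (assocInv k H
        ((map LinearMap.id (sig k H l r)) (assocMap k H (S ⊗ₜ[k] c)))))
      = (mu k H) ((map LinearMap.id l) (assocMap k H (S ⊗ₜ[k] c))) := by
    intro S
    induction S using TensorProduct.induction_on with
    | zero => simp
    | tmul x y =>
      have e1 : (map LinearMap.id (sig k H l r)) (assocMap k H ((x ⊗ₜ[k] y) ⊗ₜ[k] c))
          = x ⊗ₜ[k] sig k H l r (y ⊗ₜ[k] c) := by
        simp
      rw [e1, lam_push, hK]
      simp
    | add S₁ S₂ ih₁ ih₂ => simp only [add_tmul, map_add, ih₁, ih₂]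
  have hbr := LinearMap.congr_fun h ((a ⊗ₜ[k] b) ⊗ₜ[k] c)
  simp only [LinearMap.comp_apply] at hbr ⊢
  have e2 : (map LinearMap.id (mu k H)) (assocMap k H ((a ⊗ₜ[k] b) ⊗ₜ[k] c))
      = a ⊗ₜ[k] (b * c) := by simp
  rw [e2] at hbr ⊢
  have e3 : (map (sig k H l r) LinearMap.id) ((a ⊗ₜ[k] b) ⊗ₜ[k] c)
      = sig k H l r (a ⊗ₜ[k] b) ⊗ₜ[k] c := by simp
  rw [e3] at hbr ⊢
  calc l (a ⊗ₜ[k] (b * c)) = lam (sig k H l r (a ⊗ₜ[k] (b * c))) := (hK _).symm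
    _ = _ := by rw [hbr]; exact main _

theorem part4_forward (l r : H ⊗[k] H →ₗ[k] H)
    (hcounit_l : eps k H ∘ₗ l = epseps k H)
    (h : sig k H l r ∘ₗ map (mu k H) LinearMap.id
        = map LinearMap.id (mu k H) ∘ₗ assocMap k H ∘ₗ map (sig k H l r) LinearMap.id ∘ₗ
            assocInv k H ∘ₗ map LinearMap.id (sig k H l r) ∘ₗ assocMap k H) :
    r ∘ₗ map (mu k H) LinearMap.id
        = mu k H ∘ₗ map r LinearMap.id ∘ₗ assocInv k H ∘ₗ map LinearMap.id (sig k H l r) ∘ₗ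
            assocMap k H := by
  have hK : ∀ x : H ⊗[k] H, lam' (sig k H l r x) = r x :=
    fun x => LinearMap.congr_fun (lam'_comp_sig l r hcounit_l) x
  apply TensorProduct.ext_threefold
  intro a b c
  have main : ∀ T : H ⊗[k] H,
      lam' ((map LinearMap.id (mu k H)) (assocMap k H
        ((map (sig k H l r) LinearMap.id) (assocInv k H (a ⊗ₜ[k] T)))))
      = (mu k H) ((map r LinearMap.id) (assocInv k H (a ⊗ₜ[k] T))) := by
    intro T
    induction T using TensorProduct.induction_on with
    | zero => simp
    | tmul u v =>
      have e1 : (map (sig k H l r) LinearMap.id) (assocInv k H (a ⊗ₜ[k] (u ⊗ₜ[k] v)))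
          = sig k H l r (a ⊗ₜ[k] u) ⊗ₜ[k] v := by
        simp
      rw [e1, lam'_push, hK]
      simp
    | add T₁ T₂ ih₁ ih₂ => simp only [tmul_add, map_add, ih₁, ih₂]
  have hbr := LinearMap.congr_fun h ((a ⊗ₜ[k] b) ⊗ₜ[k] c)
  simp only [LinearMap.comp_apply] at hbr ⊢
  have e2 : (map (mu k H) LinearMap.id) ((a ⊗ₜ[k] b) ⊗ₜ[k] c) = (a * b) ⊗ₜ[k] c := by
    simp
  rw [e2] at hbr ⊢
  have e3 : assocMap k H ((a ⊗ₜ[k] b) ⊗ₜ[k] c) = a ⊗ₜ[k] (b ⊗ₜ[k] c) := by simp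
  rw [e3] at hbr ⊢
  calc r ((a * b) ⊗ₜ[k] c) = lam' (sig k H l r ((a * b) ⊗ₜ[k] c)) := (hK _).symm
    _ = _ := by rw [hbr]; exact main _

theorem sum5_reorder {M : Type*} [AddCommMonoid M]
    {ia ib ic : Type*} {ip : ia → Type*} {iq : ib → Type*}
    (sa : Finset ia) (sb : Finset ib) (sc : Finset ic)
    (sp : ∀ i, Finset (ip i)) (sq : ∀ j, Finset (iq j))
    (f : ∀ i, ip i → ∀ j, iq j → ic → M) :
    ∑ i ∈ sa, ∑ j ∈ sb, ∑ c ∈ sc, ∑ p ∈ sp i, ∑ q ∈ sq j, f i p j q c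
      = ∑ i ∈ sa, ∑ p ∈ sp i, ∑ j ∈ sb, ∑ q ∈ sq j, ∑ c ∈ sc, f i p j q c := by
  refine Finset.sum_congr rfl fun i _ => ?_
  calc ∑ j ∈ sb, ∑ c ∈ sc, ∑ p ∈ sp i, ∑ q ∈ sq j, f i p j q c
      = ∑ j ∈ sb, ∑ p ∈ sp i, ∑ c ∈ sc, ∑ q ∈ sq j, f i p j q c :=
        Finset.sum_congr rfl fun j _ => Finset.sum_comm
    _ = ∑ j ∈ sb, ∑ p ∈ sp i, ∑ q ∈ sq j, ∑ c ∈ sc, f i p j q c :=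
        Finset.sum_congr rfl fun j _ => Finset.sum_congr rfl fun p _ => Finset.sum_comm
    _ = ∑ p ∈ sp i, ∑ j ∈ sb, ∑ q ∈ sq j, ∑ c ∈ sc, f i p j q c := Finset.sum_comm

set_option maxHeartbeats 1000000 in
theorem sum5_key {M : Type*} [AddCommMonoid M]
    {ia ib ic : Type*} {ip : ia → Type*} {iq : ib → Type*}
    (sa : Finset ia) (sb : Finset ib) (sc : Finset ic)
    (sp : ∀ i, Finset (ip i)) (sq : ∀ j, Finset (iq j))
    (f : ∀ i, ip i → ∀ j, iq j → ic → M) :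
    ∑ c ∈ sc, ∑ j ∈ sb, ∑ q ∈ sq j, ∑ i ∈ sa, ∑ p ∈ sp i, f i p j q c
      = ∑ i ∈ sa, ∑ p ∈ sp i, ∑ j ∈ sb, ∑ q ∈ sq j, ∑ c ∈ sc, f i p j q c := by
  calc ∑ c ∈ sc, ∑ j ∈ sb, ∑ q ∈ sq j, ∑ i ∈ sa, ∑ p ∈ sp i, f i p j q c
      = ∑ c ∈ sc, ∑ j ∈ sb, ∑ i ∈ sa, ∑ q ∈ sq j, ∑ p ∈ sp i, f i p j q c :=
        Finset.sum_congr rfl fun c _ => Finset.sum_congr rfl fun j _ => Finset.sum_comm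
    _ = ∑ c ∈ sc, ∑ i ∈ sa, ∑ j ∈ sb, ∑ q ∈ sq j, ∑ p ∈ sp i, f i p j q c :=
        Finset.sum_congr rfl fun c _ => Finset.sum_comm
    _ = ∑ i ∈ sa, ∑ c ∈ sc, ∑ j ∈ sb, ∑ q ∈ sq j, ∑ p ∈ sp i, f i p j q c :=
        Finset.sum_comm
    _ = ∑ i ∈ sa, ∑ c ∈ sc, ∑ j ∈ sb, ∑ p ∈ sp i, ∑ q ∈ sq j, f i p j q c :=
        Finset.sum_congr rfl fun i _ => Finset.sum_congr rfl fun c _ =>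
          Finset.sum_congr rfl fun j _ => Finset.sum_comm
    _ = ∑ i ∈ sa, ∑ c ∈ sc, ∑ p ∈ sp i, ∑ j ∈ sb, ∑ q ∈ sq j, f i p j q c :=
        Finset.sum_congr rfl fun i _ => Finset.sum_congr rfl fun c _ => Finset.sum_comm
    _ = ∑ i ∈ sa, ∑ p ∈ sp i, ∑ c ∈ sc, ∑ j ∈ sb, ∑ q ∈ sq j, f i p j q c :=
        Finset.sum_congr rfl fun i _ => Finset.sum_comm
    _ = ∑ i ∈ sa, ∑ p ∈ sp i, ∑ j ∈ sb, ∑ c ∈ sc, ∑ q ∈ sq j, f i p j q c :=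
        Finset.sum_congr rfl fun i _ => Finset.sum_congr rfl fun p _ => Finset.sum_comm
    _ = ∑ i ∈ sa, ∑ p ∈ sp i, ∑ j ∈ sb, ∑ q ∈ sq j, ∑ c ∈ sc, f i p j q c :=
        Finset.sum_congr rfl fun i _ => Finset.sum_congr rfl fun p _ =>
          Finset.sum_congr rfl fun j _ => Finset.sum_comm

set_option maxHeartbeats 1000000 in
theorem part3_backward (l r : H ⊗[k] H →ₗ[k] H)
    (hr2 : ∀ a b c : H, r (a ⊗ₜ[k] (b * c)) = r (r (a ⊗ₜ[k] b) ⊗ₜ[k] c))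
    (hcomul_r : delta k H ∘ₗ r = map r r ∘ₗ dd k H)
    (h3 : l ∘ₗ map LinearMap.id (mu k H) ∘ₗ assocMap k H
        = mu k H ∘ₗ map LinearMap.id l ∘ₗ assocMap k H ∘ₗ map (sig k H l r) LinearMap.id) :
    sig k H l r ∘ₗ map LinearMap.id (mu k H) ∘ₗ assocMap k H
        = map (mu k H) LinearMap.id ∘ₗ assocInv k H ∘ₗ map LinearMap.id (sig k H l r) ∘ₗ
            assocMap k H ∘ₗ map (sig k H l r) LinearMap.id := by
  apply TensorProduct.ext_threefold
  intro a b c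
  set ra := Coalgebra.Repr.arbitrary k a with hra
  set rb := Coalgebra.Repr.arbitrary k b with hrb
  set rc := Coalgebra.Repr.arbitrary k c with hrc
  set r1a : ∀ i, Coalgebra.Repr k (ra.left i) (H × H) := fun i => Coalgebra.Repr.arbitrary k _ with hr1a
  set r2a : ∀ i, Coalgebra.Repr k (ra.right i) (H × H) := fun i => Coalgebra.Repr.arbitrary k _ with hr2a
  set r1b : ∀ j, Coalgebra.Repr k (rb.left j) (H × H) := fun j => Coalgebra.Repr.arbitrary k _ with hr1b
  set r2b : ∀ j, Coalgebra.Repr k (rb.right j) (H × H) := fun j => Coalgebra.Repr.arbitrary k _ with hr2b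
  simp only [LinearMap.comp_apply]
  -- LHS
  have eL1 : (map LinearMap.id (mu k H)) (assocMap k H ((a ⊗ₜ[k] b) ⊗ₜ[k] c))
      = a ⊗ₜ[k] (b * c) := by simp
  rw [eL1]
  have eL : sig k H l r (a ⊗ₜ[k] (b * c))
      = ∑ i ∈ ra.index, ∑ j ∈ rb.index, ∑ kk ∈ rc.index,
          ∑ p ∈ (r1a i).index, ∑ q ∈ (r1b j).index,
          (l ((r1a i).left p ⊗ₜ[k] (r1b j).left q)
            * l (r ((r1a i).right p ⊗ₜ[k] (r1b j).right q) ⊗ₜ[k] rc.left kk))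
          ⊗ₜ[k] r (r (ra.right i ⊗ₜ[k] rb.right j) ⊗ₜ[k] rc.right kk) := by
    rw [sig_expand l r a (b * c) ra.index (rb.index ×ˢ rc.index) ra.left ra.right
      (fun p => rb.left p.1 * rc.left p.2) (fun p => rb.right p.1 * rc.right p.2)
      (repr_delta a ra) (delta_mul b c rb rc)]
    refine Finset.sum_congr rfl fun i _ => ?_
    rw [Finset.sum_product]
    refine Finset.sum_congr rfl fun j _ => Finset.sum_congr rfl fun kk _ => ?_
    rw [hr2, mp3_pointwise l r h3 _ _ _ (r1a i) (r1b j)]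
    simp only [sum_tmul]
  rw [eL]
  -- RHS
  have eR1 : (map (sig k H l r) LinearMap.id) ((a ⊗ₜ[k] b) ⊗ₜ[k] c)
      = sig k H l r (a ⊗ₜ[k] b) ⊗ₜ[k] c := by simp
  rw [eR1, sig_tmul l r a b ra rb]
  have eσ : ∀ i j, sig k H l r (r (ra.right i ⊗ₜ[k] rb.right j) ⊗ₜ[k] c)
      = ∑ u ∈ (r2a i).index, ∑ v ∈ (r2b j).index, ∑ w ∈ rc.index,
          l (r ((r2a i).left u ⊗ₜ[k] (r2b j).left v) ⊗ₜ[k] rc.left w)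
          ⊗ₜ[k] r (r ((r2a i).right u ⊗ₜ[k] (r2b j).right v) ⊗ₜ[k] rc.right w) := by
    intro i j
    rw [sig_expand l r _ c ((r2a i).index ×ˢ (r2b j).index) rc.index
      (fun p => r ((r2a i).left p.1 ⊗ₜ[k] (r2b j).left p.2))
      (fun p => r ((r2a i).right p.1 ⊗ₜ[k] (r2b j).right p.2)) rc.left rc.right
      (delta_hom r hcomul_r _ _ (r2a i) (r2b j)) (repr_delta c rc)]
    rw [Finset.sum_product]
  have eR : (map (mu k H) LinearMap.id) (assocInv k H ((map LinearMap.id (sig k H l r))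
        (assocMap k H ((∑ i ∈ ra.index, ∑ j ∈ rb.index,
          l (ra.left i ⊗ₜ[k] rb.left j) ⊗ₜ[k] r (ra.right i ⊗ₜ[k] rb.right j)) ⊗ₜ[k] c))))
      = ∑ i ∈ ra.index, ∑ j ∈ rb.index,
          ∑ u ∈ (r2a i).index, ∑ v ∈ (r2b j).index, ∑ w ∈ rc.index,
          (l (ra.left i ⊗ₜ[k] rb.left j)
            * l (r ((r2a i).left u ⊗ₜ[k] (r2b j).left v) ⊗ₜ[k] rc.left w))
          ⊗ₜ[k] r (r ((r2a i).right u ⊗ₜ[k] (r2b j).right v) ⊗ₜ[k] rc.right w) := by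
    simp only [sum_tmul, map_sum, assocMap_tmul, map_tmul, LinearMap.id_coe, id_eq]
    refine Finset.sum_congr rfl fun i _ => Finset.sum_congr rfl fun j _ => ?_
    rw [eσ i j]
    simp only [tmul_sum, map_sum, assocInv_tmul, map_tmul, LinearMap.id_coe, id_eq, mu_tmul]
  rw [eR]
  -- the key coassociativity step
  have hA := Coalgebra.sum_tmul_tmul_eq (R := k) ra r1a r2a
  have hB := Coalgebra.sum_tmul_tmul_eq (R := k) rb r1b r2b
  have hel : (∑ i ∈ ra.index, ∑ p ∈ (r1a i).index,
        (r1a i).left p ⊗ₜ[k] ((r1a i).right p ⊗ₜ[k] ra.right i))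
      ⊗ₜ[k] ((∑ j ∈ rb.index, ∑ q ∈ (r1b j).index,
        (r1b j).left q ⊗ₜ[k] ((r1b j).right q ⊗ₜ[k] rb.right j))
      ⊗ₜ[k] (∑ w ∈ rc.index, rc.left w ⊗ₜ[k] rc.right w))
      = (∑ i ∈ ra.index, ∑ u ∈ (r2a i).index,
        ra.left i ⊗ₜ[k] ((r2a i).left u ⊗ₜ[k] (r2a i).right u))
      ⊗ₜ[k] ((∑ j ∈ rb.index, ∑ v ∈ (r2b j).index,
        rb.left j ⊗ₜ[k] ((r2b j).left v ⊗ₜ[k] (r2b j).right v))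
      ⊗ₜ[k] (∑ w ∈ rc.index, rc.left w ⊗ₜ[k] rc.right w)) := by
    rw [hA, hB]
  have key := congrArg (theta k H l r) hel
  simp only [sum_tmul, tmul_sum, map_sum, theta_tmul] at key
  calc (∑ i ∈ ra.index, ∑ j ∈ rb.index, ∑ kk ∈ rc.index,
          ∑ p ∈ (r1a i).index, ∑ q ∈ (r1b j).index,
          (l ((r1a i).left p ⊗ₜ[k] (r1b j).left q)
            * l (r ((r1a i).right p ⊗ₜ[k] (r1b j).right q) ⊗ₜ[k] rc.left kk))
          ⊗ₜ[k] r (r (ra.right i ⊗ₜ[k] rb.right j) ⊗ₜ[k] rc.right kk))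
      = ∑ i ∈ ra.index, ∑ p ∈ (r1a i).index, ∑ j ∈ rb.index, ∑ q ∈ (r1b j).index,
          ∑ kk ∈ rc.index,
          (l ((r1a i).left p ⊗ₜ[k] (r1b j).left q)
            * l (r ((r1a i).right p ⊗ₜ[k] (r1b j).right q) ⊗ₜ[k] rc.left kk))
          ⊗ₜ[k] r (r (ra.right i ⊗ₜ[k] rb.right j) ⊗ₜ[k] rc.right kk) :=
        sum5_reorder _ _ _ _ _ _
    _ = ∑ kk ∈ rc.index, ∑ j ∈ rb.index, ∑ q ∈ (r1b j).index,
          ∑ i ∈ ra.index, ∑ p ∈ (r1a i).index,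
          (l ((r1a i).left p ⊗ₜ[k] (r1b j).left q)
            * l (r ((r1a i).right p ⊗ₜ[k] (r1b j).right q) ⊗ₜ[k] rc.left kk))
          ⊗ₜ[k] r (r (ra.right i ⊗ₜ[k] rb.right j) ⊗ₜ[k] rc.right kk) :=
        (sum5_key _ _ _ _ _ _).symm
    _ = ∑ w ∈ rc.index, ∑ j ∈ rb.index, ∑ v ∈ (r2b j).index,
          ∑ i ∈ ra.index, ∑ u ∈ (r2a i).index,
          (l (ra.left i ⊗ₜ[k] rb.left j)
            * l (r ((r2a i).left u ⊗ₜ[k] (r2b j).left v) ⊗ₜ[k] rc.left w))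
          ⊗ₜ[k] r (r ((r2a i).right u ⊗ₜ[k] (r2b j).right v) ⊗ₜ[k] rc.right w) := key
    _ = ∑ i ∈ ra.index, ∑ u ∈ (r2a i).index, ∑ j ∈ rb.index, ∑ v ∈ (r2b j).index,
          ∑ w ∈ rc.index,
          (l (ra.left i ⊗ₜ[k] rb.left j)
            * l (r ((r2a i).left u ⊗ₜ[k] (r2b j).left v) ⊗ₜ[k] rc.left w))
          ⊗ₜ[k] r (r ((r2a i).right u ⊗ₜ[k] (r2b j).right v) ⊗ₜ[k] rc.right w) :=
        sum5_key _ _ _ _ _ _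
    _ = ∑ i ∈ ra.index, ∑ j ∈ rb.index,
          ∑ u ∈ (r2a i).index, ∑ v ∈ (r2b j).index, ∑ w ∈ rc.index,
          (l (ra.left i ⊗ₜ[k] rb.left j)
            * l (r ((r2a i).left u ⊗ₜ[k] (r2b j).left v) ⊗ₜ[k] rc.left w))
          ⊗ₜ[k] r (r ((r2a i).right u ⊗ₜ[k] (r2b j).right v) ⊗ₜ[k] rc.right w) :=
        Finset.sum_congr rfl fun i _ => Finset.sum_comm

theorem sum5_perm4 {M : Type*} [AddCommMonoid M]
    {ia ib ic : Type*} {iq : ib → Type*} {iu : ic → Type*}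
    (sa : Finset ia) (sb : Finset ib) (sc : Finset ic)
    (sq : ∀ j, Finset (iq j)) (su : ∀ w, Finset (iu w))
    (f : ia → ∀ j, iq j → ∀ w, iu w → M) :
    ∑ i ∈ sa, ∑ j ∈ sb, ∑ w ∈ sc, ∑ q ∈ sq j, ∑ u ∈ su w, f i j q w u
      = ∑ i ∈ sa, ∑ w ∈ sc, ∑ u ∈ su w, ∑ j ∈ sb, ∑ q ∈ sq j, f i j q w u := by
  refine Finset.sum_congr rfl fun i _ => ?_
  calc ∑ j ∈ sb, ∑ w ∈ sc, ∑ q ∈ sq j, ∑ u ∈ su w, f i j q w u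
      = ∑ j ∈ sb, ∑ w ∈ sc, ∑ u ∈ su w, ∑ q ∈ sq j, f i j q w u :=
        Finset.sum_congr rfl fun j _ => Finset.sum_congr rfl fun w _ => Finset.sum_comm
    _ = ∑ w ∈ sc, ∑ j ∈ sb, ∑ u ∈ su w, ∑ q ∈ sq j, f i j q w u := Finset.sum_comm
    _ = ∑ w ∈ sc, ∑ u ∈ su w, ∑ j ∈ sb, ∑ q ∈ sq j, f i j q w u :=
        Finset.sum_congr rfl fun w _ => Finset.sum_comm

theorem sum5_perm4' {M : Type*} [AddCommMonoid M]
    {ia ib ic : Type*} {iq : ib → Type*} {iu : ic → Type*}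
    (sa : Finset ia) (sb : Finset ib) (sc : Finset ic)
    (sq : ∀ j, Finset (iq j)) (su : ∀ w, Finset (iu w))
    (f : ia → ∀ j, iq j → ∀ w, iu w → M) :
    ∑ j ∈ sb, ∑ w ∈ sc, ∑ i ∈ sa, ∑ q ∈ sq j, ∑ u ∈ su w, f i j q w u
      = ∑ i ∈ sa, ∑ w ∈ sc, ∑ u ∈ su w, ∑ j ∈ sb, ∑ q ∈ sq j, f i j q w u := by
  calc ∑ j ∈ sb, ∑ w ∈ sc, ∑ i ∈ sa, ∑ q ∈ sq j, ∑ u ∈ su w, f i j q w u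
      = ∑ j ∈ sb, ∑ i ∈ sa, ∑ w ∈ sc, ∑ q ∈ sq j, ∑ u ∈ su w, f i j q w u :=
        Finset.sum_congr rfl fun j _ => Finset.sum_comm
    _ = ∑ i ∈ sa, ∑ j ∈ sb, ∑ w ∈ sc, ∑ q ∈ sq j, ∑ u ∈ su w, f i j q w u :=
        Finset.sum_comm
    _ = ∑ i ∈ sa, ∑ w ∈ sc, ∑ u ∈ su w, ∑ j ∈ sb, ∑ q ∈ sq j, f i j q w u :=
        sum5_perm4 _ _ _ _ _ _

set_option maxHeartbeats 1000000 in
theorem part4_backward (l r : H ⊗[k] H →ₗ[k] H)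
    (hl2 : ∀ a b c : H, l ((a * b) ⊗ₜ[k] c) = l (a ⊗ₜ[k] l (b ⊗ₜ[k] c)))
    (hcomul_l : delta k H ∘ₗ l = map l l ∘ₗ dd k H)
    (h4 : r ∘ₗ map (mu k H) LinearMap.id
        = mu k H ∘ₗ map r LinearMap.id ∘ₗ assocInv k H ∘ₗ map LinearMap.id (sig k H l r) ∘ₗ
            assocMap k H) :
    sig k H l r ∘ₗ map (mu k H) LinearMap.id
        = map LinearMap.id (mu k H) ∘ₗ assocMap k H ∘ₗ map (sig k H l r) LinearMap.id ∘ₗ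
            assocInv k H ∘ₗ map LinearMap.id (sig k H l r) ∘ₗ assocMap k H := by
  apply TensorProduct.ext_threefold
  intro a b c
  set ra := Coalgebra.Repr.arbitrary k a with hra
  set rb := Coalgebra.Repr.arbitrary k b with hrb
  set rc := Coalgebra.Repr.arbitrary k c with hrc
  set r1b : ∀ j, Coalgebra.Repr k (rb.left j) (H × H) := fun j => Coalgebra.Repr.arbitrary k _ with hr1b
  set r2b : ∀ j, Coalgebra.Repr k (rb.right j) (H × H) := fun j => Coalgebra.Repr.arbitrary k _ with hr2b
  set r1c : ∀ w, Coalgebra.Repr k (rc.left w) (H × H) := fun w => Coalgebra.Repr.arbitrary k _ with hr1c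
  set r2c : ∀ w, Coalgebra.Repr k (rc.right w) (H × H) := fun w => Coalgebra.Repr.arbitrary k _ with hr2c
  simp only [LinearMap.comp_apply]
  -- LHS
  have eL1 : (map (mu k H) LinearMap.id) ((a ⊗ₜ[k] b) ⊗ₜ[k] c) = (a * b) ⊗ₜ[k] c := by simp
  rw [eL1]
  have eL : sig k H l r ((a * b) ⊗ₜ[k] c)
      = ∑ i ∈ ra.index, ∑ j ∈ rb.index, ∑ w ∈ rc.index,
          ∑ q ∈ (r2b j).index, ∑ u ∈ (r2c w).index,
          l (ra.left i ⊗ₜ[k] l (rb.left j ⊗ₜ[k] rc.left w))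
          ⊗ₜ[k] (r (ra.right i ⊗ₜ[k] l ((r2b j).left q ⊗ₜ[k] (r2c w).left u))
            * r ((r2b j).right q ⊗ₜ[k] (r2c w).right u)) := by
    rw [sig_expand l r (a * b) c (ra.index ×ˢ rb.index) rc.index
      (fun p => ra.left p.1 * rb.left p.2) (fun p => ra.right p.1 * rb.right p.2)
      rc.left rc.right (delta_mul a b ra rb) (repr_delta c rc)]
    rw [Finset.sum_product]
    refine Finset.sum_congr rfl fun i _ => Finset.sum_congr rfl fun j _ =>
      Finset.sum_congr rfl fun w _ => ?_
    rw [hl2, mp4_pointwise l r h4 _ _ _ (r2b j) (r2c w)]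
    simp only [tmul_sum]
  rw [eL]
  -- RHS
  have eσ4 : ∀ j w, sig k H l r (a ⊗ₜ[k] l (rb.left j ⊗ₜ[k] rc.left w))
      = ∑ i ∈ ra.index, ∑ q ∈ (r1b j).index, ∑ u ∈ (r1c w).index,
          l (ra.left i ⊗ₜ[k] l ((r1b j).left q ⊗ₜ[k] (r1c w).left u))
          ⊗ₜ[k] r (ra.right i ⊗ₜ[k] l ((r1b j).right q ⊗ₜ[k] (r1c w).right u)) := by
    intro j w
    rw [sig_expand l r a _ ra.index ((r1b j).index ×ˢ (r1c w).index) ra.left ra.right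
      (fun p => l ((r1b j).left p.1 ⊗ₜ[k] (r1c w).left p.2))
      (fun p => l ((r1b j).right p.1 ⊗ₜ[k] (r1c w).right p.2))
      (repr_delta a ra) (delta_hom l hcomul_l _ _ (r1b j) (r1c w))]
    refine Finset.sum_congr rfl fun i _ => ?_
    rw [Finset.sum_product]
  have eR : (map LinearMap.id (mu k H)) (assocMap k H ((map (sig k H l r) LinearMap.id)
        (assocInv k H ((map LinearMap.id (sig k H l r))
          (assocMap k H ((a ⊗ₜ[k] b) ⊗ₜ[k] c))))))
      = ∑ j ∈ rb.index, ∑ w ∈ rc.index, ∑ i ∈ ra.index,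
          ∑ q ∈ (r1b j).index, ∑ u ∈ (r1c w).index,
          l (ra.left i ⊗ₜ[k] l ((r1b j).left q ⊗ₜ[k] (r1c w).left u))
          ⊗ₜ[k] (r (ra.right i ⊗ₜ[k] l ((r1b j).right q ⊗ₜ[k] (r1c w).right u))
            * r (rb.right j ⊗ₜ[k] rc.right w)) := by
    have e1 : (map LinearMap.id (sig k H l r)) (assocMap k H ((a ⊗ₜ[k] b) ⊗ₜ[k] c))
        = a ⊗ₜ[k] sig k H l r (b ⊗ₜ[k] c) := by simp
    rw [e1, sig_tmul l r b c rb rc]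
    simp only [tmul_sum, map_sum, assocInv_tmul, map_tmul, LinearMap.id_coe, id_eq]
    refine Finset.sum_congr rfl fun j _ => Finset.sum_congr rfl fun w _ => ?_
    rw [eσ4 j w]
    simp only [sum_tmul, map_sum, assocMap_tmul, map_tmul, LinearMap.id_coe, id_eq, mu_tmul]
  rw [eR]
  -- the key coassociativity step
  have hB := Coalgebra.sum_tmul_tmul_eq (R := k) rb r1b r2b
  have hC := Coalgebra.sum_tmul_tmul_eq (R := k) rc r1c r2c
  have hel : (∑ j ∈ rb.index, ∑ q ∈ (r1b j).index,
        (r1b j).left q ⊗ₜ[k] ((r1b j).right q ⊗ₜ[k] rb.right j))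
      ⊗ₜ[k] ((∑ w ∈ rc.index, ∑ u ∈ (r1c w).index,
        (r1c w).left u ⊗ₜ[k] ((r1c w).right u ⊗ₜ[k] rc.right w))
      ⊗ₜ[k] (∑ i ∈ ra.index, ra.left i ⊗ₜ[k] ra.right i))
      = (∑ j ∈ rb.index, ∑ q ∈ (r2b j).index,
        rb.left j ⊗ₜ[k] ((r2b j).left q ⊗ₜ[k] (r2b j).right q))
      ⊗ₜ[k] ((∑ w ∈ rc.index, ∑ u ∈ (r2c w).index,
        rc.left w ⊗ₜ[k] ((r2c w).left u ⊗ₜ[k] (r2c w).right u))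
      ⊗ₜ[k] (∑ i ∈ ra.index, ra.left i ⊗ₜ[k] ra.right i)) := by
    rw [hB, hC]
  have key := congrArg (theta' k H l r) hel
  simp only [sum_tmul, tmul_sum, map_sum, theta'_tmul] at key
  calc (∑ i ∈ ra.index, ∑ j ∈ rb.index, ∑ w ∈ rc.index,
          ∑ q ∈ (r2b j).index, ∑ u ∈ (r2c w).index,
          l (ra.left i ⊗ₜ[k] l (rb.left j ⊗ₜ[k] rc.left w))
          ⊗ₜ[k] (r (ra.right i ⊗ₜ[k] l ((r2b j).left q ⊗ₜ[k] (r2c w).left u))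
            * r ((r2b j).right q ⊗ₜ[k] (r2c w).right u)))
      = ∑ i ∈ ra.index, ∑ w ∈ rc.index, ∑ u ∈ (r2c w).index,
          ∑ j ∈ rb.index, ∑ q ∈ (r2b j).index,
          l (ra.left i ⊗ₜ[k] l (rb.left j ⊗ₜ[k] rc.left w))
          ⊗ₜ[k] (r (ra.right i ⊗ₜ[k] l ((r2b j).left q ⊗ₜ[k] (r2c w).left u))
            * r ((r2b j).right q ⊗ₜ[k] (r2c w).right u)) := sum5_perm4 _ _ _ _ _ _
    _ = ∑ i ∈ ra.index, ∑ w ∈ rc.index, ∑ u ∈ (r1c w).index,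
          ∑ j ∈ rb.index, ∑ q ∈ (r1b j).index,
          l (ra.left i ⊗ₜ[k] l ((r1b j).left q ⊗ₜ[k] (r1c w).left u))
          ⊗ₜ[k] (r (ra.right i ⊗ₜ[k] l ((r1b j).right q ⊗ₜ[k] (r1c w).right u))
            * r (rb.right j ⊗ₜ[k] rc.right w)) := key.symm
    _ = ∑ j ∈ rb.index, ∑ w ∈ rc.index, ∑ i ∈ ra.index,
          ∑ q ∈ (r1b j).index, ∑ u ∈ (r1c w).index,
          l (ra.left i ⊗ₜ[k] l ((r1b j).left q ⊗ₜ[k] (r1c w).left u))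
          ⊗ₜ[k] (r (ra.right i ⊗ₜ[k] l ((r1b j).right q ⊗ₜ[k] (r1c w).right u))
            * r (rb.right j ⊗ₜ[k] rc.right w)) := (sum5_perm4' _ _ _ _ _ _).symm

end Tamb

/-- Lemma 2.4 / Tambara: for a bialgebra `H` with a left action `⇀ = l` and a
right action `↼ = r` of `H` on itself making `H` a left resp. right `H`-module coalgebra,
the map `σ(a⊗b) = (a₁⇀b₁)⊗(a₂↼b₂)` satisfies (br.1)–(br.4) iff `(l,r)` satisfies
(mp.1)–(mp.4). -/
theorem braided_conditions_iff_matched_pair_conditions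
    (l r : H ⊗[k] H →ₗ[k] H)
    (hl1 : ∀ b : H, l ((1 : H) ⊗ₜ[k] b) = b)
    (hl2 : ∀ a b c : H, l ((a * b) ⊗ₜ[k] c) = l (a ⊗ₜ[k] l (b ⊗ₜ[k] c)))
    (hr1 : ∀ a : H, r (a ⊗ₜ[k] (1 : H)) = a)
    (hr2 : ∀ a b c : H, r (a ⊗ₜ[k] (b * c)) = r (r (a ⊗ₜ[k] b) ⊗ₜ[k] c))
    (hcomul_l : delta k H ∘ₗ l = map l l ∘ₗ dd k H)
    (hcounit_l : eps k H ∘ₗ l = epseps k H)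
    (hcomul_r : delta k H ∘ₗ r = map r r ∘ₗ dd k H)
    (hcounit_r : eps k H ∘ₗ r = epseps k H) :
    ((∀ a : H, sig k H l r (a ⊗ₜ[k] (1 : H)) = (1 : H) ⊗ₜ[k] a) ∧
     (∀ b : H, sig k H l r ((1 : H) ⊗ₜ[k] b) = b ⊗ₜ[k] (1 : H)) ∧
     (sig k H l r ∘ₗ map LinearMap.id (mu k H) ∘ₗ assocMap k H
        = map (mu k H) LinearMap.id ∘ₗ assocInv k H ∘ₗ map LinearMap.id (sig k H l r) ∘ₗ
            assocMap k H ∘ₗ map (sig k H l r) LinearMap.id) ∧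
     (sig k H l r ∘ₗ map (mu k H) LinearMap.id
        = map LinearMap.id (mu k H) ∘ₗ assocMap k H ∘ₗ map (sig k H l r) LinearMap.id ∘ₗ
            assocInv k H ∘ₗ map LinearMap.id (sig k H l r) ∘ₗ assocMap k H))
    ↔
    ((∀ a : H, l (a ⊗ₜ[k] (1 : H)) = eps k H a • (1 : H)) ∧
     (∀ b : H, r ((1 : H) ⊗ₜ[k] b) = eps k H b • (1 : H)) ∧
     (l ∘ₗ map LinearMap.id (mu k H) ∘ₗ assocMap k H
        = mu k H ∘ₗ map LinearMap.id l ∘ₗ assocMap k H ∘ₗ map (sig k H l r) LinearMap.id) ∧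
     (r ∘ₗ map (mu k H) LinearMap.id
        = mu k H ∘ₗ map r LinearMap.id ∘ₗ assocInv k H ∘ₗ map LinearMap.id (sig k H l r) ∘ₗ
            assocMap k H)) := by
  constructor
  · rintro ⟨h1, h2, h3, h4⟩
    exact ⟨(Tamb.part1 l r hr1).mp h1, (Tamb.part2 l r hl1).mp h2,
      Tamb.part3_forward l r hcounit_r h3, Tamb.part4_forward l r hcounit_l h4⟩
  · rintro ⟨h1, h2, h3, h4⟩
    exact ⟨(Tamb.part1 l r hr1).mpr h1, (Tamb.part2 l r hl1).mpr h2,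
      Tamb.part3_backward l r hr2 hcomul_r h3, Tamb.part4_backward l r hl2 hcomul_l h4⟩

end
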